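/- Let N ≥ 1 be an integer, let 0 < p < 1, set μ = Np, and let 0 < δ < 1. Then ∑_{k = 0,…,N with |k − μ| > δμ} B(k; N, p) < 2·exp(−δ²μ/4). -/

import Mathlib

open Finset Real

private lemma binom_mgf (N : ℕ) (p t : ℝ) :
    ∑ k ∈ Finset.range (N + 1),
      Real.exp (t * k) * ((N.choose k : ℝ) * p ^ k * (1 - p) ^ (N - k))
      = (1 - p + p * Real.exp t) ^ N := by
  rw [add_comm (1 - p), add_pow]
  refine Finset.sum_congr rfl fun k hk => ?_
  rw [mul_pow, mul_comm t (k : ℝ), Real.exp_nat_mul]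
  ring

private lemma binom_tail (N : ℕ) (p t a : ℝ) (hp0 : 0 < p) (hp1 : p < 1)
    (P : ℕ → Prop) [DecidablePred P]
    (hP : ∀ k, k ∈ Finset.range (N + 1) → P k → a ≤ t * k) :
    ∑ k ∈ (Finset.range (N + 1)).filter P,
      (N.choose k : ℝ) * p ^ k * (1 - p) ^ (N - k)
      ≤ Real.exp (-a) * (1 - p + p * Real.exp t) ^ N := by
  have hBnn : ∀ k : ℕ, 0 ≤ (N.choose k : ℝ) * p ^ k * (1 - p) ^ (N - k) := by
    intro k
    have := hp0.le
    have h1p : (0:ℝ) ≤ 1 - p := by linarith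
    positivity
  calc ∑ k ∈ (Finset.range (N + 1)).filter P,
        (N.choose k : ℝ) * p ^ k * (1 - p) ^ (N - k)
      ≤ ∑ k ∈ (Finset.range (N + 1)).filter P,
        Real.exp (t * k - a) * ((N.choose k : ℝ) * p ^ k * (1 - p) ^ (N - k)) := by
        refine Finset.sum_le_sum fun k hk => ?_
        rcases Finset.mem_filter.mp hk with ⟨hk1, hk2⟩
        have h1 : (1:ℝ) ≤ Real.exp (t * k - a) := by
          rw [Real.one_le_exp_iff]
          have := hP k hk1 hk2; linarith
        nlinarith [hBnn k]
    _ ≤ ∑ k ∈ Finset.range (N + 1),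
        Real.exp (t * k - a) * ((N.choose k : ℝ) * p ^ k * (1 - p) ^ (N - k)) := by
        refine Finset.sum_le_sum_of_subset_of_nonneg (Finset.filter_subset _ _)
          fun k _ _ => ?_
        have := hBnn k
        positivity
    _ = Real.exp (-a) * (1 - p + p * Real.exp t) ^ N := by
        rw [← binom_mgf N p t, Finset.mul_sum]
        refine Finset.sum_congr rfl fun k hk => ?_
        have he : Real.exp (t * k - a) = Real.exp (-a) * Real.exp (t * k) := by
          rw [← Real.exp_add]; ring_nf
        rw [he]; ring

private lemma exp_quad_bound {x : ℝ} (hx : |x| ≤ 1) :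
    Real.exp x ≤ 1 + x + (3/4) * x ^ 2 := by
  have h := Real.exp_bound hx (n := 2) (by norm_num)
  have h2 : |Real.exp x - (1 + x)| ≤ x ^ 2 * (3/4) := by
    have : ∑ m ∈ Finset.range 2, x ^ m / (m.factorial : ℝ) = 1 + x := by
      simp [Finset.sum_range_succ]
    rw [this] at h
    calc |Real.exp x - (1 + x)| ≤ |x| ^ 2 * (3 / ((2:ℕ).factorial * 2)) := by
          simpa using h
      _ = x ^ 2 * (3/4) := by rw [sq_abs]; norm_num [Nat.factorial]
    
  have := abs_le.mp h2
  linarith [this.2]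

/-- Let `N ≥ 1` be an integer, `0 < p < 1`, set `μ = N·p`, and let `0 < δ < 1`.
Then `∑_{k ≤ N, |k - μ| > δ·μ} B(k; N, p) < 2·exp(-δ²·μ/4)`, where
`B(k; N, p) = C(N,k)·p^k·(1-p)^(N-k)`. -/
theorem binomial_chernoff_two_sided
    (N : ℕ) (hN : 1 ≤ N) (p δ : ℝ)
    (hp0 : 0 < p) (hp1 : p < 1) (hδ0 : 0 < δ) (hδ1 : δ < 1) :
    ∑ k ∈ (Finset.range (N + 1)).filter (fun k : ℕ => δ * (N * p) < |(k : ℝ) - N * p|),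
      (N.choose k : ℝ) * p ^ k * (1 - p) ^ (N - k)
      < 2 * Real.exp (-(δ ^ 2 * (N * p)) / 4) := by
  classical
  set μ : ℝ := N * p with hμ
  have hNpos : (0:ℝ) < N := by exact_mod_cast Nat.lt_of_lt_of_le Nat.zero_lt_one hN
  have hμpos : 0 < μ := by positivity
  -- split the filter into upper and lower tails
  have hsplit : (Finset.range (N + 1)).filter (fun k : ℕ => δ * μ < |(k : ℝ) - μ|)
      = (Finset.range (N + 1)).filter (fun k : ℕ => δ * μ < (k : ℝ) - μ)
        ∪ (Finset.range (N + 1)).filter (fun k : ℕ => δ * μ < μ - (k : ℝ)) := by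
    rw [← Finset.filter_or]
    refine Finset.filter_congr fun k _ => ?_
    rw [lt_abs]
    constructor
    · rintro (h | h); · exact Or.inl h
      · right; linarith
    · rintro (h | h); · exact Or.inl h
      · right; linarith
  have hdisj : Disjoint ((Finset.range (N + 1)).filter (fun k : ℕ => δ * μ < (k : ℝ) - μ))
      ((Finset.range (N + 1)).filter (fun k : ℕ => δ * μ < μ - (k : ℝ))) := by
    rw [Finset.disjoint_left]
    intro k hk1 hk2
    rcases Finset.mem_filter.mp hk1 with ⟨_, h1⟩
    rcases Finset.mem_filter.mp hk2 with ⟨_, h2⟩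
    have hδμ : 0 < δ * μ := by positivity
    linarith
  -- the generic strict bound for each tail
  have key : ∀ t a : ℝ, t ≠ 0 → (-a + μ * (Real.exp t - 1) ≤ -(δ ^ 2 * μ) / 4) →
      (∀ k, k ∈ Finset.range (N + 1) → True) → Real.exp (-a) * (1 - p + p * Real.exp t) ^ N
        < Real.exp (-(δ ^ 2 * μ) / 4) := by
    intro t a ht hle _
    have h1 : 1 - p + p * Real.exp t < Real.exp (p * (Real.exp t - 1)) := by
      have hne : p * (Real.exp t - 1) ≠ 0 := by
        have : Real.exp t ≠ 1 := by
          simpa [Real.exp_eq_one_iff] using ht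
        intro h
        rcases mul_eq_zero.mp h with h | h
        · exact hp0.ne' h
        · exact this (by linarith)
      have := Real.add_one_lt_exp hne
      linarith
    have hpos : (0:ℝ) < 1 - p + p * Real.exp t := by
      have := Real.exp_pos t
      nlinarith
    have h2 : (1 - p + p * Real.exp t) ^ N < Real.exp (p * (Real.exp t - 1)) ^ N :=
      pow_lt_pow_left₀ h1 hpos.le (by omega)
    have h3 : Real.exp (p * (Real.exp t - 1)) ^ N = Real.exp (μ * (Real.exp t - 1)) := by
      rw [← Real.exp_nat_mul, hμ]; ring_nf
    calc Real.exp (-a) * (1 - p + p * Real.exp t) ^ N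
        < Real.exp (-a) * Real.exp (μ * (Real.exp t - 1)) := by
          rw [← h3]
          exact mul_lt_mul_of_pos_left h2 (Real.exp_pos _)
      _ = Real.exp (-a + μ * (Real.exp t - 1)) := (Real.exp_add _ _).symm
      _ ≤ Real.exp (-(δ ^ 2 * μ) / 4) := Real.exp_le_exp.mpr hle
  -- upper tail
  have hupper : ∑ k ∈ (Finset.range (N + 1)).filter (fun k : ℕ => δ * μ < (k : ℝ) - μ),
      (N.choose k : ℝ) * p ^ k * (1 - p) ^ (N - k) < Real.exp (-(δ ^ 2 * μ) / 4) := by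
    have ht := binom_tail N p δ (δ * (1 + δ) * μ) hp0 hp1
      (fun k : ℕ => δ * μ < (k : ℝ) - μ)
      (fun k _ hk => by nlinarith)
    refine lt_of_le_of_lt ht ?_
    refine key δ (δ * (1 + δ) * μ) hδ0.ne' ?_ (fun _ _ => trivial)
    have hb : Real.exp δ ≤ 1 + δ + (3/4) * δ ^ 2 :=
      exp_quad_bound (by rw [abs_of_pos hδ0]; linarith)
    nlinarith
  -- lower tail
  have hlower : ∑ k ∈ (Finset.range (N + 1)).filter (fun k : ℕ => δ * μ < μ - (k : ℝ)),
      (N.choose k : ℝ) * p ^ k * (1 - p) ^ (N - k) < Real.exp (-(δ ^ 2 * μ) / 4) := by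
    have ht := binom_tail N p (-δ) (-δ * (1 - δ) * μ) hp0 hp1
      (fun k : ℕ => δ * μ < μ - (k : ℝ))
      (fun k _ hk => by nlinarith)
    refine lt_of_le_of_lt ht ?_
    refine key (-δ) (-δ * (1 - δ) * μ) (by simpa using hδ0.ne') ?_ (fun _ _ => trivial)
    have hb : Real.exp (-δ) ≤ 1 + (-δ) + (3/4) * (-δ) ^ 2 :=
      exp_quad_bound (by rw [abs_neg, abs_of_pos hδ0]; linarith)
    nlinarith
  rw [hsplit, Finset.sum_union hdisj]
  have : -(δ ^ 2 * (N * p)) / 4 = -(δ ^ 2 * μ) / 4 := by rw [hμ]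
  rw [this]
  linarith
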